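/- Let h be a positive odd integer and r an integer such that gcd(r,h) is squarefree. Then the infinite product defining 𝔠(r,h) converges and 𝔠(r,h) > 0. -/

import Mathlib

noncomputable section

/-- The local factor at `ℓ` of the constant `𝔠(r,h)`; it is `1` unless `ℓ` is an odd prime. -/
noncomputable def locC (r : ℤ) (h : ℕ) (ℓ : ℕ) : ℝ :=
  if ℓ.Prime ∧ ℓ ≠ 2 then
    if ℓ ∣ h then
      if (ℓ : ℤ) ∣ r then
        (if ¬ (ℓ ^ 2 ∣ h) then ((ℓ : ℝ) - 1) / (ℓ : ℝ) else 1)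
      else ((ℓ : ℝ) * ((ℓ : ℝ) - 1 - (jacobiSym r ℓ : ℝ))) /
        (((ℓ : ℝ) - 1) * ((ℓ : ℝ) - (jacobiSym r ℓ : ℝ)))
    else ((ℓ : ℝ) ^ 4 - 2 * (ℓ : ℝ) ^ 2 - (ℓ : ℝ) + 1) / ((ℓ : ℝ) ^ 2 * ((ℓ : ℝ) ^ 2 - 1))
  else 1

lemma jacobi_abs_le (r : ℤ) (ℓ : ℕ) : |(jacobiSym r ℓ : ℝ)| ≤ 1 := by
  rcases jacobiSym.trichotomy r ℓ with h | h | h <;> rw [h] <;> norm_num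

lemma locC_half_le (r : ℤ) (h : ℕ) (ℓ : ℕ) : 1/2 ≤ locC r h ℓ ∧
    |locC r h ℓ - 1| ≤ (if ℓ ∣ h then 1 else 0) + 2/(ℓ:ℝ)^2 := by
  have h2 : (0:ℝ) ≤ 2/(ℓ:ℝ)^2 := by positivity
  unfold locC
  split_ifs with hp hdvd hr hsq
  · constructor
    · norm_num
    · simp only [sub_self, abs_zero]; linarith
  · -- (ℓ-1)/ℓ case
    have hL : (3:ℝ) ≤ (ℓ:ℝ) := by
      have := hp.1.two_le
      have : 3 ≤ ℓ := by omega
      exact_mod_cast this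
    have hL0 : (0:ℝ) < ℓ := by linarith
    constructor
    · rw [le_div_iff₀ hL0]; linarith
    · have heq : ((ℓ:ℝ) - 1)/ℓ - 1 = -(1/ℓ) := by field_simp; ring
      rw [heq, abs_neg, abs_of_nonneg (by positivity)]
      have : 1/(ℓ:ℝ) ≤ 1 := by rw [div_le_one hL0]; linarith
      linarith
  · -- jacobi case
    have hL : (3:ℝ) ≤ (ℓ:ℝ) := by
      have := hp.1.two_le
      have : 3 ≤ ℓ := by omega
      exact_mod_cast this
    set c : ℝ := (jacobiSym r ℓ : ℝ) with hc
    have hc1 : |c| ≤ 1 := jacobi_abs_le r ℓ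
    have hcu : c ≤ 1 := (abs_le.mp hc1).2
    have hcl : -1 ≤ c := (abs_le.mp hc1).1
    have hd1 : (0:ℝ) < (ℓ:ℝ) - 1 := by linarith
    have hd2 : (0:ℝ) < (ℓ:ℝ) - c := by linarith
    have hden : (0:ℝ) < ((ℓ:ℝ) - 1) * ((ℓ:ℝ) - c) := mul_pos hd1 hd2
    constructor
    · rw [le_div_iff₀ hden]; nlinarith
    · rw [div_sub_one (ne_of_gt hden), abs_div, abs_of_pos hden,
        div_le_iff₀ hden]
      have heq : (ℓ:ℝ) * ((ℓ:ℝ) - 1 - c) - ((ℓ:ℝ) - 1) * ((ℓ:ℝ) - c) = -c := by ring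
      rw [heq, abs_neg]
      nlinarith
  · -- quartic case
    have hL : (3:ℝ) ≤ (ℓ:ℝ) := by
      have := hp.1.two_le
      have : 3 ≤ ℓ := by omega
      exact_mod_cast this
    have h9 : (9:ℝ) ≤ (ℓ:ℝ)^2 := by nlinarith
    have h3 : 3*(ℓ:ℝ) ≤ (ℓ:ℝ)^2 := by nlinarith
    have h4 : 9*(ℓ:ℝ)^2 ≤ (ℓ:ℝ)^4 := by
      nlinarith [mul_nonneg (sq_nonneg (ℓ:ℝ)) (by linarith : (0:ℝ) ≤ (ℓ:ℝ)^2 - 9)]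
    have hden : (0:ℝ) < (ℓ:ℝ)^2 * ((ℓ:ℝ)^2 - 1) :=
      mul_pos (by nlinarith) (by linarith)
    constructor
    · rw [le_div_iff₀ hden]; nlinarith
    · rw [div_sub_one (ne_of_gt hden), abs_div, abs_of_pos hden, div_le_iff₀ hden]
      have h1 : (ℓ:ℝ)^4 - 2*(ℓ:ℝ)^2 - (ℓ:ℝ) + 1 - (ℓ:ℝ)^2 * ((ℓ:ℝ)^2 - 1)
          = -((ℓ:ℝ)^2 + (ℓ:ℝ) - 1) := by ring
      rw [h1, abs_neg, abs_of_pos (by nlinarith), zero_add]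
      have hne : (ℓ:ℝ) ≠ 0 := by linarith
      have h5 : (2/(ℓ:ℝ)^2)*((ℓ:ℝ)^2*((ℓ:ℝ)^2-1)) = 2*((ℓ:ℝ)^2-1) := by
        field_simp
      rw [h5]; linarith
  all_goals
    refine ⟨by norm_num, ?_⟩
    simp only [sub_self, abs_zero]
    positivity

lemma abs_log_le2 {x : ℝ} (hx : 1/2 ≤ x) : |Real.log x| ≤ 2 * |x - 1| := by
  have hx0 : (0:ℝ) < x := by linarith
  rcases le_or_gt 1 x with h1 | h1
  · rw [abs_of_nonneg (Real.log_nonneg h1), abs_of_nonneg (by linarith)]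
    have := Real.log_le_sub_one_of_pos hx0
    linarith
  · rw [abs_of_nonpos (Real.log_nonpos hx0.le h1.le), abs_of_neg (by linarith)]
    have hinv := Real.log_le_sub_one_of_pos (inv_pos.mpr hx0)
    rw [Real.log_inv] at hinv
    have key : x⁻¹ - 1 ≤ 2*(1-x) := by
      rw [inv_eq_one_div, sub_le_iff_le_add, div_le_iff₀ hx0]
      nlinarith
    linarith

lemma summable_log_locC (r : ℤ) (h : ℕ) (hpos : 0 < h) :
    Summable fun ℓ => Real.log (locC r h ℓ) := by
  have hb : Summable (fun ℓ : ℕ => 2*((if ℓ ∣ h then (1:ℝ) else 0) + 2/(ℓ:ℝ)^2)) := by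
    apply Summable.mul_left
    apply Summable.add
    · apply summable_of_ne_finset_zero (s := Finset.range (h+1))
      intro b hb
      rw [if_neg]
      intro hd
      have := Nat.le_of_dvd hpos hd
      simp [Finset.mem_range] at hb
      omega
    · have h1 : Summable (fun n : ℕ => 1/(n:ℝ)^2) :=
        Real.summable_one_div_nat_pow.mpr one_lt_two
      simpa [div_eq_mul_inv] using h1.mul_left 2
  apply Summable.of_abs
  apply hb.of_nonneg_of_le (fun ℓ => abs_nonneg _)
  intro ℓ
  calc |Real.log (locC r h ℓ)| ≤ 2 * |locC r h ℓ - 1| := abs_log_le2 (locC_half_le r h ℓ).1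
    _ ≤ 2*((if ℓ ∣ h then (1:ℝ) else 0) + 2/(ℓ:ℝ)^2) := by
        have := (locC_half_le r h ℓ).2; linarith

/-- The constant `𝔠(r,h)` of David--Jiménez Urroz. -/
noncomputable def frakC (r : ℤ) (h : ℕ) : ℝ := (1 / (3 * (h : ℝ))) * ∏' ℓ : ℕ, locC r h ℓ

/-- for `h` a positive odd integer and `r` an integer with `gcd(r,h)`
squarefree, the infinite product defining `𝔠(r,h)` converges and `𝔠(r,h) > 0`. -/
theorem stmt15 (h : ℕ) (hpos : 0 < h) (hodd : Odd h) (r : ℤ)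
    (hsf : Squarefree (Int.gcd r (h : ℤ))) :
    Multipliable (locC r h) ∧ 0 < frakC r h := by
  have hp : ∀ ℓ, 0 < locC r h ℓ :=
    fun ℓ => lt_of_lt_of_le (by norm_num) (locC_half_le r h ℓ).1
  have hsum := summable_log_locC r h hpos
  have hmult : Multipliable (locC r h) :=
    Real.multipliable_of_summable_log hp hsum
  refine ⟨hmult, ?_⟩
  have heq := Real.rexp_tsum_eq_tprod hp hsum
  unfold frakC
  apply mul_pos
  · have : (0:ℝ) < h := by exact_mod_cast hpos
    positivity
  · rw [← heq]; exact Real.exp_pos _
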